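/- arXiv:2411.14260 — 2 statements merged into one kernel-verified Lean document; each statement's English description precedes it below -/
import Mathlib

section
/- Let m > 1. There exists a constant C > 0, depending only on m, such that for all a, b ∈ ℝ: (β(a) − β(b))(a − b) ≥ C(⟦a⟧^{(m+1)/(2m)} − ⟦b⟧^{(m+1)/(2m)})². -/
/-- Signed power: `spow r x = |x|^(r-1) * x`. -/
noncomputable def spow (r x : ℝ) : ℝ := |x| ^ (r - 1) * x

open MeasureTheory Set Real intervalIntegral

lemma spow_neg' (r x : ℝ) : spow r (-x) = -spow r x := by
  simp only [spow, abs_neg]; ring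

lemma spow_of_nonneg {r x : ℝ} (hr : 0 < r) (hx : 0 ≤ x) : spow r x = x ^ r := by
  rcases eq_or_lt_of_le hx with h | h
  · simp [spow, ← h, Real.zero_rpow hr.ne']
  · rw [spow, abs_of_pos h, ← Real.rpow_add_one h.ne']
    ring_nf

/-- integrability of `|t|^s` for `s > -1`. -/
lemma intervalIntegrable_abs_rpow {s : ℝ} (hs : -1 < s) (a b : ℝ) :
    IntervalIntegrable (fun t => |t| ^ s) volume a b := by
  have key : ∀ c : ℝ, 0 ≤ c → IntervalIntegrable (fun t => |t| ^ s) volume 0 c := by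
    intro c hc
    rw [intervalIntegrable_iff]
    refine (intervalIntegrable_rpow' (a := 0) (b := c) hs).def'.congr_fun ?_ measurableSet_uIoc
    intro x hx
    rw [uIoc_of_le hc] at hx
    show x ^ s = |x| ^ s
    rw [abs_of_pos hx.1]
  have key2 : ∀ c : ℝ, IntervalIntegrable (fun t => |t| ^ s) volume 0 c := by
    intro c
    rcases le_total 0 c with hc | hc
    · exact key c hc
    · rw [IntervalIntegrable.iff_comp_neg, neg_zero]
      simpa using key (-c) (by linarith)
  exact (key2 a).symm.trans (key2 b)

/-- `∫_0^x |t|^(r-1) dt = spow r x / r` for `0 < r`. -/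
lemma integral_abs_rpow_eq (r : ℝ) (hr : 0 < r) (hr1 : r ≤ 1) (x : ℝ) :
    ∫ t in (0:ℝ)..x, |t| ^ (r - 1) = spow r x / r := by
  have hs : -1 < r - 1 := by linarith
  have base : ∀ y : ℝ, 0 ≤ y → ∫ t in (0:ℝ)..y, |t| ^ (r - 1) = spow r y / r := by
    intro y hy
    have hcong : ∫ t in (0:ℝ)..y, |t| ^ (r - 1) = ∫ t in (0:ℝ)..y, t ^ (r - 1) := by
      apply intervalIntegral.integral_congr
      intro t ht
      rw [uIcc_of_le hy] at ht
      rcases eq_or_lt_of_le ht.1 with h | h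
      · rw [← h]; simp
      · show |t| ^ (r - 1) = t ^ (r - 1)
        rw [abs_of_pos h]
    rw [hcong, integral_rpow (Or.inl hs), sub_add_cancel,
      Real.zero_rpow hr.ne', spow_of_nonneg hr hy]
    ring_nf
  rcases le_total 0 x with hx | hx
  · exact base x hx
  · have h1 : ∫ t in (0:ℝ)..x, |t| ^ (r - 1)
        = ∫ t in (0:ℝ)..x, |(-t)| ^ (r - 1) := by simp
    rw [h1, intervalIntegral.integral_comp_neg (fun t => |t| ^ (r - 1)), neg_zero]
    have h2 : ∫ t in (-x)..(0:ℝ), |t| ^ (r - 1)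
        = -(∫ t in (0:ℝ)..(-x), |t| ^ (r - 1)) := by
      rw [intervalIntegral.integral_symm]
    rw [h2, base (-x) (by linarith), spow_neg']
    ring

/-- FTC form: `spow r a - spow r b = r * ∫_b^a |t|^(r-1)`. -/
lemma spow_sub_eq_integral (r : ℝ) (hr : 0 < r) (hr1 : r ≤ 1) (a b : ℝ) :
    spow r a - spow r b = r * ∫ t in b..a, |t| ^ (r - 1) := by
  have hs : -1 < r - 1 := by linarith
  have h := intervalIntegral.integral_interval_sub_left
    (intervalIntegrable_abs_rpow hs 0 a) (intervalIntegrable_abs_rpow hs 0 b)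
  rw [integral_abs_rpow_eq r hr hr1 a, integral_abs_rpow_eq r hr hr1 b] at h
  rw [← h]
  field_simp

/-- Cauchy–Schwarz / Jensen: `(∫_b^a f)² ≤ (a-b) ∫_b^a f²` for interval-integrable `f, f²`. -/
lemma sq_integral_le (f : ℝ → ℝ) (a b : ℝ) (hba : b ≤ a)
    (hf : IntervalIntegrable f volume b a)
    (hf2 : IntervalIntegrable (fun t => (f t) ^ 2) volume b a) :
    (∫ t in b..a, f t) ^ 2 ≤ (a - b) * ∫ t in b..a, (f t) ^ 2 := by
  rcases eq_or_lt_of_le hba with h | h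
  · simp [← h]
  · set μ : Measure ℝ := volume.restrict (Ioc b a) with hμ
    have hμuniv : μ univ = ENNReal.ofReal (a - b) := by
      rw [hμ, Measure.restrict_apply_univ, Real.volume_Ioc]
    haveI : IsFiniteMeasure μ := ⟨by rw [hμuniv]; exact ENNReal.ofReal_lt_top⟩
    haveI : NeZero μ := by
      refine ⟨fun hz => ?_⟩
      rw [← Measure.measure_univ_eq_zero] at hz
      rw [hμuniv] at hz
      rw [ENNReal.ofReal_eq_zero] at hz
      linarith
    have hfi : Integrable f μ := by
      rw [intervalIntegrable_iff_integrableOn_Ioc_of_le hba] at hf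
      exact hf
    have hgi : Integrable (fun t => (f t) ^ 2) μ := by
      rw [intervalIntegrable_iff_integrableOn_Ioc_of_le hba] at hf2
      exact hf2
    have jensen := (Even.convexOn_pow (even_two : Even 2)).map_average_le
      (g := fun x : ℝ => x ^ 2) (f := f) (μ := μ)
      (continuous_pow 2).continuousOn isClosed_univ
      (Filter.Eventually.of_forall fun x => mem_univ _) hfi hgi
    rw [average_eq, average_eq] at jensen
    have hT : (μ univ).toReal = a - b := by
      rw [hμuniv, ENNReal.toReal_ofReal (by linarith)]
    rw [measureReal_def, hT] at jensen
    have hint1 : ∫ t in b..a, f t = ∫ x, f x ∂μ := by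
      rw [intervalIntegral.integral_of_le hba]
    have hint2 : ∫ t in b..a, (f t) ^ 2 = ∫ x, (f x) ^ 2 ∂μ := by
      rw [intervalIntegral.integral_of_le hba]
    rw [hint1, hint2]
    have hab : 0 < a - b := by linarith
    simp only [smul_eq_mul] at jensen
    calc (∫ x, f x ∂μ) ^ 2
        = (a - b) ^ 2 * ((a - b)⁻¹ * ∫ x, f x ∂μ) ^ 2 := by
          field_simp
      _ ≤ (a - b) ^ 2 * ((a - b)⁻¹ * ∫ x, (f x) ^ 2 ∂μ) :=
          mul_le_mul_of_nonneg_left jensen (by positivity)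
      _ = (a - b) * ∫ x, (f x) ^ 2 ∂μ := by
          field_simp

lemma stmt5_le (m : ℝ) (hm : 1 < m) (a b : ℝ) (hba : b ≤ a) :
    (spow m⁻¹ a - spow m⁻¹ b) * (a - b) ≥
      (m⁻¹ / ((m + 1) / (2 * m)) ^ 2) *
        (spow ((m + 1) / (2 * m)) a - spow ((m + 1) / (2 * m)) b) ^ 2 := by
  have hm0 : 0 < m := by linarith
  set q : ℝ := m⁻¹ with hq
  set p : ℝ := (m + 1) / (2 * m) with hp
  have hq0 : 0 < q := by positivity
  have hq1 : q ≤ 1 := by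
    rw [hq, inv_le_one_iff₀]; right; linarith
  have hp0 : 0 < p := by positivity
  have hp1 : p ≤ 1 := by
    rw [hp, div_le_one (by positivity)]; linarith
  have hpq : p - 1 = (q - 1) / 2 := by
    rw [hp, hq]
    field_simp
    ring
  -- FTC representations
  have hQ := spow_sub_eq_integral q hq0 hq1 a b
  have hP := spow_sub_eq_integral p hp0 hp1 a b
  -- a - b as integral of 1 is just a - b
  set f : ℝ → ℝ := fun t => |t| ^ (p - 1) with hf
  have hfsq : ∀ t : ℝ, (f t) ^ 2 = |t| ^ (q - 1) := by
    intro t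
    rw [hf]
    rw [← Real.rpow_natCast (|t| ^ (p - 1)) 2, ← Real.rpow_mul (abs_nonneg t)]
    congr 1
    rw [hpq]
    push_cast
    ring
  have hintf : IntervalIntegrable f volume b a :=
    intervalIntegrable_abs_rpow (by rw [hpq]; linarith) b a
  have hintf2 : IntervalIntegrable (fun t => (f t) ^ 2) volume b a := by
    have := intervalIntegrable_abs_rpow (s := q - 1) (by linarith) b a
    apply this.congr
    intro t _
    exact (hfsq t).symm
  have CS := sq_integral_le f a b hba hintf hintf2
  have hcongr : ∫ t in b..a, (f t) ^ 2 = ∫ t in b..a, |t| ^ (q - 1) := by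
    apply intervalIntegral.integral_congr
    intro t _
    exact hfsq t
  rw [hcongr] at CS
  -- assemble
  rw [ge_iff_le, hQ, hP]
  set I1 : ℝ := ∫ t in b..a, |t| ^ (q - 1) with hI1
  set I2 : ℝ := ∫ t in b..a, f t with hI2
  have key : I2 ^ 2 ≤ (a - b) * I1 := CS
  have hC : q / p ^ 2 * (p * I2) ^ 2 ≤ q * I1 * (a - b) := by
    have h1 : q / p ^ 2 * (p * I2) ^ 2 = q * I2 ^ 2 := by
      field_simp
    rw [h1]
    calc q * I2 ^ 2 ≤ q * ((a - b) * I1) := by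
          exact mul_le_mul_of_nonneg_left key hq0.le
      _ = q * I1 * (a - b) := by ring
  linarith [hC]

/-- For `m > 1` there is `C > 0`, depending only on `m`, such that for
all `a, b ∈ ℝ`: `(β(a) − β(b))(a − b) ≥ C(⟦a⟧^{(m+1)/(2m)} − ⟦b⟧^{(m+1)/(2m)})²`,
where `β(θ) = ⟦θ⟧^{1/m}`. -/
theorem stmt5 (m : ℝ) (hm : 1 < m) :
    ∃ C : ℝ, 0 < C ∧ ∀ a b : ℝ,
      (spow m⁻¹ a - spow m⁻¹ b) * (a - b) ≥
        C * (spow ((m + 1) / (2 * m)) a - spow ((m + 1) / (2 * m)) b) ^ 2 := by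
  have hm0 : 0 < m := by linarith
  refine ⟨m⁻¹ / ((m + 1) / (2 * m)) ^ 2, by positivity, fun a b => ?_⟩
  rcases le_total b a with h | h
  · exact stmt5_le m hm a b h
  · have := stmt5_le m hm b a h
    have e1 : (spow m⁻¹ b - spow m⁻¹ a) * (b - a)
        = (spow m⁻¹ a - spow m⁻¹ b) * (a - b) := by ring
    have e2 : (spow ((m + 1) / (2 * m)) b - spow ((m + 1) / (2 * m)) a) ^ 2
        = (spow ((m + 1) / (2 * m)) a - spow ((m + 1) / (2 * m)) b) ^ 2 := by ring
    rw [e1, e2] at this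
    exact this
end

section
/- (Scheme L^r-estimate for one implicit time step.) Let d ≥ 1, p ∈ (1,∞), s ∈ (0,1), m > 1, Δt > 0, let Ω ⊂ ℝ^d be open and bounded, and let w ∈ L^∞(Ω), h ∈ L^∞(Ω) and v ∈ W^{s,p}_0(Ω) ∩ L^∞(Ω) satisfy, for every φ ∈ W^{s,p}_0(Ω) ∩ L^∞(Ω): (1/Δt)∫_Ω (β(v) − β(w))φ dx + E(v, φ) = ∫_Ω hφ dx. Then for every r ∈ [m, ∞): ‖β(v)‖_{L^r(Ω)} ≤ ‖β(w)‖_{L^r(Ω)} + Δt‖h‖_{L^r(Ω)}, and moreover ‖β(v)‖_{L^∞(Ω)} ≤ ‖β(w)‖_{L^∞(Ω)} + Δt‖h‖_{L^∞(Ω)}. -/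
open MeasureTheory ENNReal

/-- Fractional p-Laplacian pairing
`E(u,φ) = ∫∫ ⟦u(x)−u(y)⟧^{p−1}(φ(x)−φ(y)) |x−y|^{−(d+sp)} dx dy`. -/
noncomputable def fracPairing (d : ℕ) (s p : ℝ)
    (u φ : EuclideanSpace ℝ (Fin d) → ℝ) : ℝ :=
  ∫ z : EuclideanSpace ℝ (Fin d) × EuclideanSpace ℝ (Fin d),
    spow (p - 1) (u z.1 - u z.2) * (φ z.1 - φ z.2) / ‖z.1 - z.2‖ ^ ((d : ℝ) + s * p)

/-- Gagliardo seminorm to the `p`-th power, as an extended nonnegative real. -/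
noncomputable def gagliardo (d : ℕ) (s p : ℝ)
    (u : EuclideanSpace ℝ (Fin d) → ℝ) : ℝ≥0∞ :=
  ∫⁻ z : EuclideanSpace ℝ (Fin d) × EuclideanSpace ℝ (Fin d),
    ENNReal.ofReal (|u z.1 - u z.2| ^ p / ‖z.1 - z.2‖ ^ ((d : ℝ) + s * p))

/-- Membership in `W^{s,p}_0(Ω)`. -/
def memW0 (d : ℕ) (s p : ℝ) (Ω : Set (EuclideanSpace ℝ (Fin d)))
    (u : EuclideanSpace ℝ (Fin d) → ℝ) : Prop :=
  Measurable u ∧ MemLp u (ENNReal.ofReal p) volume ∧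
    gagliardo d s p u < ⊤ ∧ ∀ᵐ x, x ∉ Ω → u x = 0


section Helpers
open Real


@[simp] lemma spow_zero (r : ℝ) : spow r 0 = 0 := by simp [spow]

lemma measurable_spow (r : ℝ) : Measurable (spow r) :=
  (measurable_abs.pow_const _).mul measurable_id

lemma abs_spow {r : ℝ} (hr : r ≠ 0) (x : ℝ) : |spow r x| = |x| ^ r := by
  rcases eq_or_ne x 0 with rfl | hx
  · simp [Real.zero_rpow hr]
  · rw [spow, abs_mul, abs_of_nonneg (Real.rpow_nonneg (abs_nonneg x) _),
      ← Real.rpow_add_one (abs_ne_zero.2 hx)]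
    ring_nf

lemma self_mul_spow {q : ℝ} (hq : q ≠ -1) (x : ℝ) : x * spow q x = |x| ^ (q + 1) := by
  rcases eq_or_ne x 0 with rfl | hx
  · have : q + 1 ≠ 0 := by intro h; apply hq; linarith
    simp [Real.zero_rpow this]
  · have hx' : (0:ℝ) < |x| := abs_pos.2 hx
    have h2 : |x| ^ (q + 1) = |x| ^ (2:ℝ) * |x| ^ (q - 1) := by
      rw [← Real.rpow_add hx']; ring_nf
    rw [spow, h2, Real.rpow_two, sq_abs]
    ring

lemma spow_spow {a b : ℝ} (hb : b ≠ 0) (x : ℝ) :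
    spow a (spow b x) = spow (a * b) x := by
  rcases eq_or_ne x 0 with rfl | hx
  · simp
  · have hx' : (0:ℝ) < |x| := abs_pos.2 hx
    rw [spow, abs_spow hb, spow, ← Real.rpow_mul hx'.le, ← mul_assoc, ← Real.rpow_add hx', spow]
    congr 2
    ring

lemma spow_nonneg {r x : ℝ} (hx : 0 ≤ x) : 0 ≤ spow r x :=
  mul_nonneg (Real.rpow_nonneg (abs_nonneg x) _) hx

lemma spow_nonpos {r x : ℝ} (hx : x ≤ 0) : spow r x ≤ 0 :=
  mul_nonpos_of_nonneg_of_nonpos (Real.rpow_nonneg (abs_nonneg x) _) hx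



/-- smooth approximation of `spow q`. -/
noncomputable def gq (q ε t : ℝ) : ℝ := t * (t ^ 2 + ε ^ 2) ^ ((q - 1) / 2)

lemma gq_hasDerivAt {ε : ℝ} (hε : 0 < ε) (q t : ℝ) :
    HasDerivAt (gq q ε) ((t ^ 2 + ε ^ 2) ^ ((q - 1) / 2 - 1) * (q * t ^ 2 + ε ^ 2)) t := by
  have hu : (0:ℝ) < t ^ 2 + ε ^ 2 := by positivity
  have h1 : HasDerivAt (fun t : ℝ => t ^ 2 + ε ^ 2) (2 * t) t := by
    simpa using ((hasDerivAt_pow 2 t).add_const (ε ^ 2))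
  have h2 : HasDerivAt (fun t : ℝ => (t ^ 2 + ε ^ 2) ^ ((q - 1) / 2))
      (2 * t * ((q - 1) / 2) * (t ^ 2 + ε ^ 2) ^ ((q - 1) / 2 - 1)) t :=
    HasDerivAt.rpow_const h1 (Or.inl hu.ne')
  have h3 := (hasDerivAt_id t).mul h2
  refine h3.congr_deriv ?_
  have hsplit : (t ^ 2 + ε ^ 2) ^ ((q - 1) / 2) =
      (t ^ 2 + ε ^ 2) ^ ((q - 1) / 2 - 1) * (t ^ 2 + ε ^ 2) := by
    rw [← Real.rpow_add_one hu.ne']; ring_nf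
  simp only [id_eq]; rw [hsplit]; ring

lemma gq_deriv_nonneg {ε : ℝ} (hε : 0 < ε) {q : ℝ} (hq : 0 ≤ q) (t : ℝ) :
    0 ≤ (t ^ 2 + ε ^ 2) ^ ((q - 1) / 2 - 1) * (q * t ^ 2 + ε ^ 2) := by
  have hu : (0:ℝ) < t ^ 2 + ε ^ 2 := by positivity
  have h1 : (0:ℝ) ≤ q * t ^ 2 + ε ^ 2 := by positivity
  exact mul_nonneg (Real.rpow_nonneg hu.le _) h1

lemma gq_monotone {ε : ℝ} (hε : 0 < ε) {q : ℝ} (hq : 0 ≤ q) : Monotone (gq q ε) := by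
  have hdiff : Differentiable ℝ (gq q ε) := fun t => (gq_hasDerivAt hε q t).differentiableAt
  refine monotone_of_deriv_nonneg hdiff fun t => ?_
  rw [(gq_hasDerivAt hε q t).deriv]
  exact gq_deriv_nonneg hε hq t

lemma gq_deriv_le {ε : ℝ} (hε : 0 < ε) {q : ℝ} (hq : 0 < q) {M t : ℝ} (ht : |t| ≤ M) :
    (t ^ 2 + ε ^ 2) ^ ((q - 1) / 2 - 1) * (q * t ^ 2 + ε ^ 2) ≤
      max q 1 * ((ε ^ 2) ^ ((q - 1) / 2) + (M ^ 2 + ε ^ 2) ^ ((q - 1) / 2)) := by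
  have hu : (0:ℝ) < t ^ 2 + ε ^ 2 := by positivity
  have ht2 : t ^ 2 ≤ M ^ 2 := by
    have := sq_abs t
    nlinarith [abs_nonneg t]
  have step1 : q * t ^ 2 + ε ^ 2 ≤ max q 1 * (t ^ 2 + ε ^ 2) := by
    have h1 : q ≤ max q 1 := le_max_left _ _
    have h2 : (1:ℝ) ≤ max q 1 := le_max_right _ _
    nlinarith [sq_nonneg t, sq_nonneg ε]
  have step2 : (t ^ 2 + ε ^ 2) ^ ((q - 1) / 2 - 1) * (q * t ^ 2 + ε ^ 2) ≤
      max q 1 * (t ^ 2 + ε ^ 2) ^ ((q - 1) / 2) := by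
    calc (t ^ 2 + ε ^ 2) ^ ((q - 1) / 2 - 1) * (q * t ^ 2 + ε ^ 2)
        ≤ (t ^ 2 + ε ^ 2) ^ ((q - 1) / 2 - 1) * (max q 1 * (t ^ 2 + ε ^ 2)) := by
          exact mul_le_mul_of_nonneg_left step1 (Real.rpow_nonneg hu.le _)
      _ = max q 1 * ((t ^ 2 + ε ^ 2) ^ ((q - 1) / 2 - 1) * (t ^ 2 + ε ^ 2)) := by ring
      _ = max q 1 * (t ^ 2 + ε ^ 2) ^ ((q - 1) / 2) := by
          rw [← Real.rpow_add_one hu.ne']; ring_nf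
  refine step2.trans ?_
  have hmax : (0:ℝ) ≤ max q 1 := le_trans zero_le_one (le_max_right _ _)
  refine mul_le_mul_of_nonneg_left ?_ hmax
  rcases le_or_gt 1 q with h | h
  · have : (t ^ 2 + ε ^ 2) ^ ((q - 1) / 2) ≤ (M ^ 2 + ε ^ 2) ^ ((q - 1) / 2) :=
      Real.rpow_le_rpow hu.le (by linarith) (by linarith)
    have h0 : (0:ℝ) ≤ (ε ^ 2) ^ ((q - 1) / 2) := Real.rpow_nonneg (by positivity) _
    linarith
  · have hexp : (q - 1) / 2 ≤ 0 := by linarith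
    have : (t ^ 2 + ε ^ 2) ^ ((q - 1) / 2) ≤ (ε ^ 2) ^ ((q - 1) / 2) :=
      Real.rpow_le_rpow_of_nonpos (by positivity) (by nlinarith [sq_nonneg t]) hexp
    have h0 : (0:ℝ) ≤ (M ^ 2 + ε ^ 2) ^ ((q - 1) / 2) := Real.rpow_nonneg (by nlinarith) _
    linarith

noncomputable def clampf (M t : ℝ) : ℝ := max (-M) (min M t)

lemma clampf_mem {M : ℝ} (hM : 0 ≤ M) (t : ℝ) : clampf M t ∈ Set.Icc (-M) M := by
  constructor
  · exact le_max_left _ _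
  · exact max_le (by linarith) (min_le_left _ _)

lemma clampf_monotone (M : ℝ) : Monotone (clampf M) := fun a b hab =>
  max_le_max le_rfl (min_le_min le_rfl hab)

lemma clampf_zero {M : ℝ} (hM : 0 ≤ M) : clampf M 0 = 0 := by
  simp [clampf, min_eq_right hM, max_eq_right (neg_nonpos.2 hM)]

lemma clampf_eq_self {M t : ℝ} (ht : |t| ≤ M) : clampf M t = t := by
  rw [abs_le] at ht
  rw [clampf, min_eq_right ht.2, max_eq_right ht.1]

lemma clampf_lip (M a b : ℝ) : |clampf M a - clampf M b| ≤ |a - b| := by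
  have h1 : |max (min M a) (-M) - max (min M b) (-M)| ≤ |min M a - min M b| :=
    abs_max_sub_max_le_abs _ _ _
  have h2 : |min M a - min M b| ≤ |a - b| := by
    have := abs_min_sub_min_le_max M a M b
    simpa using this
  rw [clampf, clampf, max_comm (-M) (min M a), max_comm (-M) (min M b)]
  exact h1.trans h2

/-- The truncated smooth approximation. -/
noncomputable def Gfun (q ε M t : ℝ) : ℝ := gq q ε (clampf M t)

lemma Gfun_monotone {ε : ℝ} (hε : 0 < ε) {q : ℝ} (hq : 0 ≤ q) (M : ℝ) :
    Monotone (Gfun q ε M) :=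
  (gq_monotone hε hq).comp (clampf_monotone M)

lemma Gfun_zero {ε : ℝ} {q M : ℝ} (hM : 0 ≤ M) : Gfun q ε M 0 = 0 := by
  rw [Gfun, clampf_zero hM, gq, zero_mul]

lemma Gfun_lip {ε : ℝ} (hε : 0 < ε) {q : ℝ} (hq : 0 < q) {M : ℝ} (hM : 0 ≤ M) (a b : ℝ) :
    |Gfun q ε M a - Gfun q ε M b| ≤
      (max q 1 * ((ε ^ 2) ^ ((q - 1) / 2) + (M ^ 2 + ε ^ 2) ^ ((q - 1) / 2))) * |a - b| := by
  set L := max q 1 * ((ε ^ 2) ^ ((q - 1) / 2) + (M ^ 2 + ε ^ 2) ^ ((q - 1) / 2)) with hL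
  have key : ∀ x ∈ Set.Icc (-M) M, ∀ y ∈ Set.Icc (-M) M, |gq q ε y - gq q ε x| ≤ L * |y - x| := by
    intro x hx y hy
    have := Convex.norm_image_sub_le_of_norm_hasDerivWithin_le
      (f := gq q ε) (s := Set.Icc (-M) M)
      (f' := fun t => (t ^ 2 + ε ^ 2) ^ ((q - 1) / 2 - 1) * (q * t ^ 2 + ε ^ 2))
      (fun z hz => (gq_hasDerivAt hε q z).hasDerivWithinAt)
      (fun z hz => by
        rw [Real.norm_eq_abs, abs_of_nonneg (gq_deriv_nonneg hε hq.le z)]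
        exact gq_deriv_le hε hq (abs_le.2 ⟨hz.1, hz.2⟩))
      (convex_Icc _ _) hx hy
    simpa [Real.norm_eq_abs] using this
  have h := key (clampf M b) (clampf_mem hM b) (clampf M a) (clampf_mem hM a)
  refine h.trans ?_
  have hLnn : 0 ≤ L := by
    have : (0:ℝ) ≤ (ε ^ 2) ^ ((q - 1) / 2) := Real.rpow_nonneg (by positivity) _
    have : (0:ℝ) ≤ (M ^ 2 + ε ^ 2) ^ ((q - 1) / 2) := Real.rpow_nonneg (by positivity) _
    positivity
  exact mul_le_mul_of_nonneg_left (clampf_lip M a b) hLnn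

lemma Gfun_bound {ε : ℝ} (hε : 0 < ε) (hε1 : ε ≤ 1) {q : ℝ} (hq : 0 < q) {M : ℝ} (hM : 0 ≤ M)
    (t : ℝ) : |Gfun q ε M t| ≤ (M + 1) ^ q := by
  set u := clampf M t with hu
  have hum : |u| ≤ M := abs_le.2 ⟨(clampf_mem hM t).1, (clampf_mem hM t).2⟩
  rw [Gfun, ← hu, gq, abs_mul,
    abs_of_nonneg (Real.rpow_nonneg (by positivity : (0:ℝ) ≤ u ^ 2 + ε ^ 2) _)]
  have hM1 : (0:ℝ) < M + 1 := by linarith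
  rcases le_or_gt 1 q with h1 | h1
  · have hbase : u ^ 2 + ε ^ 2 ≤ (M + 1) ^ 2 := by
      have : u ^ 2 ≤ M ^ 2 := by nlinarith [sq_abs u, abs_nonneg u]
      nlinarith
    have h2 : (u ^ 2 + ε ^ 2) ^ ((q - 1) / 2) ≤ ((M + 1) ^ 2) ^ ((q - 1) / 2) :=
      Real.rpow_le_rpow (by positivity) hbase (by linarith)
    have h3 : ((M + 1) ^ 2) ^ ((q - 1) / 2) = (M + 1) ^ (q - 1) := by
      rw [← Real.rpow_two, ← Real.rpow_mul hM1.le]; ring_nf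
    calc |u| * (u ^ 2 + ε ^ 2) ^ ((q - 1) / 2)
        ≤ (M + 1) * (M + 1) ^ (q - 1) := by
          apply mul_le_mul (by linarith) (h2.trans_eq h3) (Real.rpow_nonneg (by positivity) _)
            (by linarith)
      _ = (M + 1) ^ q := by
          rw [mul_comm, ← Real.rpow_add_one hM1.ne']; ring_nf
  · rcases eq_or_ne u 0 with h0 | h0
    · rw [h0]; simp [Real.rpow_nonneg hM1.le]
    · have hu2 : (0:ℝ) < u ^ 2 := by positivity
      have h2 : (u ^ 2 + ε ^ 2) ^ ((q - 1) / 2) ≤ (u ^ 2) ^ ((q - 1) / 2) :=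
        Real.rpow_le_rpow_of_nonpos hu2 (by nlinarith) (by linarith)
      have h3 : (u ^ 2) ^ ((q - 1) / 2) = |u| ^ (q - 1) := by
        rw [← sq_abs, ← Real.rpow_two, ← Real.rpow_mul (abs_nonneg u)]; ring_nf
      calc |u| * (u ^ 2 + ε ^ 2) ^ ((q - 1) / 2)
          ≤ |u| * |u| ^ (q - 1) := by
            exact mul_le_mul_of_nonneg_left (h2.trans_eq h3) (abs_nonneg u)
        _ = |u| ^ q := by rw [mul_comm, ← Real.rpow_add_one (abs_ne_zero.2 h0)]; ring_nf
        _ ≤ (M + 1) ^ q := Real.rpow_le_rpow (abs_nonneg u) (by linarith) hq.le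

lemma Gfun_tendsto {q : ℝ} (hq : 0 < q) {M : ℝ} (hM : 0 ≤ M) {t : ℝ} (ht : |t| ≤ M) :
    Filter.Tendsto (fun n : ℕ => Gfun q (1 / (n + 1)) M t) Filter.atTop
      (nhds (spow q t)) := by
  have hclamp : clampf M t = t := clampf_eq_self ht
  simp only [Gfun, hclamp, gq]
  rcases eq_or_ne t 0 with rfl | ht0
  · simp only [ne_eq, OfNat.ofNat_ne_zero, not_false_eq_true, zero_pow, zero_add, zero_mul]
    simp [spow]
  · have hε : Filter.Tendsto (fun n : ℕ => (1:ℝ) / (n + 1)) Filter.atTop (nhds 0) :=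
      tendsto_one_div_add_atTop_nhds_zero_nat
    have hbase : Filter.Tendsto (fun n : ℕ => t ^ 2 + (1 / ((n:ℝ) + 1)) ^ 2) Filter.atTop
        (nhds (t ^ 2)) := by
      have := (hε.pow 2).const_add (t ^ 2)
      simpa using this
    have ht2 : (0:ℝ) < t ^ 2 := by positivity
    have hcont : ContinuousAt (fun x : ℝ => x ^ ((q - 1) / 2)) (t ^ 2) :=
      Real.continuousAt_rpow_const _ _ (Or.inl ht2.ne')
    have hfin := (hcont.tendsto.comp hbase).const_mul t
    have heq : (t ^ 2) ^ ((q - 1) / 2) = |t| ^ (q - 1) := by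
      rw [← sq_abs, ← Real.rpow_two, ← Real.rpow_mul (abs_nonneg t)]; ring_nf
    rw [heq] at hfin
    have : spow q t = t * |t| ^ (q - 1) := by rw [spow]; ring
    rw [this]
    exact hfin



variable {α : Type*} [MeasurableSpace α] {μ : Measure α} [IsFiniteMeasure μ]

lemma exists_ae_bound {f : α → ℝ} (hf : MemLp f ⊤ μ) :
    ∃ C : ℝ, 0 ≤ C ∧ ∀ᵐ x ∂μ, |f x| ≤ C := by
  refine ⟨(eLpNormEssSup f μ).toReal, ENNReal.toReal_nonneg, ?_⟩
  have hne : eLpNormEssSup f μ ≠ ⊤ := by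
    have := hf.2; rwa [eLpNorm_exponent_top, lt_top_iff_ne_top] at this
  filter_upwards [ae_le_eLpNormEssSup (f := f) (μ := μ)] with x hx
  have := ENNReal.toReal_mono hne hx
  simpa [Real.norm_eq_abs] using this

lemma memℒp_of_ae_bound {f : α → ℝ} (hm : AEStronglyMeasurable f μ) {C : ℝ}
    (hC : ∀ᵐ x ∂μ, |f x| ≤ C) (p : ℝ≥0∞) : MemLp f p μ :=
  (memLp_top_of_bound hm C (by simpa [Real.norm_eq_abs] using hC)).mono_exponent le_top

lemma abstract_finite {m : ℝ} (hm : 1 < m) {Δt : ℝ} (hΔt : 0 < Δt)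
    {f g h : α → ℝ} (hf : MemLp f ⊤ μ) (hg : MemLp g ⊤ μ) (hh : MemLp h ⊤ μ)
    (KEY : ∀ r : ℝ, m ≤ r →
      ∫ x, (f x - g x) * spow (r - 1) (f x) ∂μ ≤ Δt * ∫ x, h x * spow (r - 1) (f x) ∂μ)
    {r : ℝ} (hr : m ≤ r) :
    (∫ x, |f x| ^ r ∂μ) ^ (1 / r) ≤
      (∫ x, |g x| ^ r ∂μ) ^ (1 / r) + Δt * (∫ x, |h x| ^ r ∂μ) ^ (1 / r) := by
  have hr1 : 1 < r := lt_of_lt_of_le hm hr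
  have hr0 : (0:ℝ) < r := by linarith
  have hcj : r.HolderConjugate (Real.conjExponent r) := Real.HolderConjugate.conjExponent hr1
  set r' := Real.conjExponent r with hr'
  obtain ⟨Cf, hCf0, hCf⟩ := exists_ae_bound hf
  obtain ⟨Cg, hCg0, hCg⟩ := exists_ae_bound hg
  obtain ⟨Ch, hCh0, hCh⟩ := exists_ae_bound hh
  set k := fun x => spow (r - 1) (f x) with hk
  have hkabs : ∀ x, |k x| = |f x| ^ (r - 1) := fun x => abs_spow (by linarith) _
  have hkmeas : AEStronglyMeasurable k μ :=
    ((measurable_spow (r - 1)).comp_aemeasurable hf.1.aemeasurable).aestronglyMeasurable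
  have hkbound : ∀ᵐ x ∂μ, |k x| ≤ Cf ^ (r - 1) := by
    filter_upwards [hCf] with x hx
    rw [hkabs]
    exact Real.rpow_le_rpow (abs_nonneg _) hx (by linarith)
  -- integrability
  have hfr_meas : AEStronglyMeasurable (fun x => |f x| ^ r) μ :=
    ((measurable_abs.comp_aemeasurable hf.1.aemeasurable).pow_const r).aestronglyMeasurable
  have hfr_int : Integrable (fun x => |f x| ^ r) μ := by
    refine Integrable.mono' (integrable_const (Cf ^ r)) hfr_meas ?_
    filter_upwards [hCf] with x hx
    rw [Real.norm_eq_abs, abs_of_nonneg (Real.rpow_nonneg (abs_nonneg _) _)]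
    exact Real.rpow_le_rpow (abs_nonneg _) hx hr0.le
  have hgk_int : Integrable (fun x => g x * k x) μ := by
    refine Integrable.mono' (integrable_const (Cg * Cf ^ (r - 1))) (hg.1.mul hkmeas) ?_
    filter_upwards [hCg, hkbound] with x h1 h2
    rw [Real.norm_eq_abs, abs_mul]
    exact mul_le_mul h1 h2 (abs_nonneg _) hCg0
  -- pointwise identity
  have hpt : ∀ x, (f x - g x) * k x = |f x| ^ r - g x * k x := by
    intro x
    have : f x * spow (r - 1) (f x) = |f x| ^ (r - 1 + 1) := self_mul_spow (by linarith) _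
    rw [sub_mul, hk]
    rw [this]
    ring_nf
  have step1 : ∫ x, |f x| ^ r ∂μ ≤ ∫ x, g x * k x ∂μ + Δt * ∫ x, h x * k x ∂μ := by
    have h1 := KEY r hr
    have h2 : ∫ x, (f x - g x) * spow (r - 1) (f x) ∂μ
        = ∫ x, |f x| ^ r ∂μ - ∫ x, g x * k x ∂μ := by
      rw [← integral_sub hfr_int hgk_int]
      exact integral_congr_ae (Filter.Eventually.of_forall fun x => hpt x)
    rw [h2] at h1
    linarith
  -- Hölder for both products
  have hgmem : MemLp g (ENNReal.ofReal r) μ := memℒp_of_ae_bound hg.1 hCg _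
  have hhmem : MemLp h (ENNReal.ofReal r) μ := memℒp_of_ae_bound hh.1 hCh _
  have hkmem : MemLp k (ENNReal.ofReal r') μ := memℒp_of_ae_bound hkmeas hkbound _
  have hknorm : (∫ x, ‖k x‖ ^ r' ∂μ) = ∫ x, |f x| ^ r ∂μ := by
    refine integral_congr_ae (Filter.Eventually.of_forall fun x => ?_)
    simp only [Real.norm_eq_abs]
    rw [hkabs x, ← Real.rpow_mul (abs_nonneg _), hcj.sub_one_mul_conj]
  have holder : ∀ u : α → ℝ, MemLp u (ENNReal.ofReal r) μ →
      ∫ x, u x * k x ∂μ ≤ (∫ x, |u x| ^ r ∂μ) ^ (1 / r) * (∫ x, |f x| ^ r ∂μ) ^ (1 / r') := by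
    intro u hu
    have h1 : ∫ x, u x * k x ∂μ ≤ ∫ x, ‖u x‖ * ‖k x‖ ∂μ := by
      refine le_trans (le_abs_self _) ?_
      have := norm_integral_le_integral_norm (μ := μ) (f := fun x => u x * k x)
      simpa [Real.norm_eq_abs, abs_mul] using this
    refine h1.trans ?_
    have h2 := integral_mul_norm_le_Lp_mul_Lq hcj hu hkmem
    rw [hknorm] at h2
    simpa [Real.norm_eq_abs] using h2
  have step2 : ∫ x, |f x| ^ r ∂μ ≤
      ((∫ x, |g x| ^ r ∂μ) ^ (1 / r) + Δt * (∫ x, |h x| ^ r ∂μ) ^ (1 / r)) *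
        (∫ x, |f x| ^ r ∂μ) ^ (1 / r') := by
    have h1 := holder g hgmem
    have h2 := holder h hhmem
    have h3 := step1
    nlinarith [Real.rpow_nonneg (integral_nonneg (fun x => Real.rpow_nonneg (abs_nonneg (f x)) r) : (0:ℝ) ≤ ∫ x, |f x| ^ r ∂μ) (1/r')]
  -- conclude
  set X := ∫ x, |f x| ^ r ∂μ with hX
  have hX0 : 0 ≤ X := integral_nonneg fun x => Real.rpow_nonneg (abs_nonneg _) _
  set R := (∫ x, |g x| ^ r ∂μ) ^ (1 / r) + Δt * (∫ x, |h x| ^ r ∂μ) ^ (1 / r) with hR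
  have hR0 : 0 ≤ R := by
    have h1 : (0:ℝ) ≤ (∫ x, |g x| ^ r ∂μ) ^ (1 / r) :=
      Real.rpow_nonneg (integral_nonneg fun x => Real.rpow_nonneg (abs_nonneg _) _) _
    have h2 : (0:ℝ) ≤ (∫ x, |h x| ^ r ∂μ) ^ (1 / r) :=
      Real.rpow_nonneg (integral_nonneg fun x => Real.rpow_nonneg (abs_nonneg _) _) _
    positivity
  rcases eq_or_lt_of_le hX0 with h0 | hpos
  · rw [← h0, Real.zero_rpow (by positivity : 1 / r ≠ 0)]
    exact hR0
  · have hXr' : (0:ℝ) < X ^ (1 / r') := Real.rpow_pos_of_pos hpos _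
    have hsplit : X ^ (1 / r) * X ^ (1 / r') = X := by
      rw [← Real.rpow_add hpos,
        show 1 / r + 1 / r' = 1 by rw [one_div, one_div]; exact hcj.inv_add_inv_eq_one,
        Real.rpow_one]
    have : X ^ (1 / r) * X ^ (1 / r') ≤ R * X ^ (1 / r') := by
      rw [hsplit]; exact step2
    exact le_of_mul_le_mul_right this hXr'

lemma tendsto_rpow_aux {a : ℝ≥0∞} (ha0 : a ≠ 0) (hat : a ≠ ⊤) {δ : ℕ → ℝ}
    (hδ : Filter.Tendsto δ Filter.atTop (nhds 0)) :
    Filter.Tendsto (fun n : ℕ => a ^ δ n) Filter.atTop (nhds 1) := by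
  have hta : 0 < a.toReal := ENNReal.toReal_pos ha0 hat
  have hc : ContinuousAt (fun p : ℝ × ℝ => p.1 ^ p.2) (a.toReal, 0) :=
    Real.continuousAt_rpow _ (Or.inl hta.ne')
  have h2 : Filter.Tendsto (fun n : ℕ => (a.toReal, δ n)) Filter.atTop
      (nhds (a.toReal, 0)) := Filter.Tendsto.prodMk_nhds tendsto_const_nhds hδ
  have h3 : Filter.Tendsto (fun n : ℕ => a.toReal ^ δ n) Filter.atTop
      (nhds (a.toReal ^ (0:ℝ))) := hc.tendsto.comp h2
  rw [Real.rpow_zero] at h3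
  have h4 := (ENNReal.tendsto_ofReal (α := ℕ) (f := Filter.atTop)) h3
  rw [ENNReal.ofReal_one] at h4
  refine h4.congr fun n => ?_
  rw [← ENNReal.ofReal_rpow_of_pos hta, ENNReal.ofReal_toReal hat]


lemma tendsto_exponents {m : ℝ} :
    Filter.Tendsto (fun n : ℕ => 1 / (m + n)) Filter.atTop (nhds 0) := by
  have h1 : Filter.Tendsto (fun n : ℕ => m + (n:ℝ)) Filter.atTop Filter.atTop :=
    Filter.tendsto_atTop_add_const_left _ _ tendsto_natCast_atTop_atTop
  exact h1.inv_tendsto_atTop.congr fun n => (one_div _).symm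

lemma abstract_eLpNorm_finite {m : ℝ} (hm : 1 < m) {Δt : ℝ} (hΔt : 0 < Δt)
    {f g h : α → ℝ} (hf : MemLp f ⊤ μ) (hg : MemLp g ⊤ μ) (hh : MemLp h ⊤ μ)
    (KEY : ∀ r : ℝ, m ≤ r →
      ∫ x, (f x - g x) * spow (r - 1) (f x) ∂μ ≤ Δt * ∫ x, h x * spow (r - 1) (f x) ∂μ)
    {r : ℝ} (hr : m ≤ r) :
    eLpNorm f (ENNReal.ofReal r) μ ≤
      eLpNorm g (ENNReal.ofReal r) μ + ENNReal.ofReal Δt * eLpNorm h (ENNReal.ofReal r) μ := by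
  have hr0 : (0:ℝ) < r := by linarith
  have hp0 : ENNReal.ofReal r ≠ 0 := by simp [ENNReal.ofReal_eq_zero, not_le, hr0]
  have hpt : ENNReal.ofReal r ≠ ⊤ := ENNReal.ofReal_ne_top
  have htr : (ENNReal.ofReal r).toReal = r := ENNReal.toReal_ofReal hr0.le
  obtain ⟨Cf, _, hCf⟩ := exists_ae_bound hf
  obtain ⟨Cg, _, hCg⟩ := exists_ae_bound hg
  obtain ⟨Ch, _, hCh⟩ := exists_ae_bound hh
  have hfmem := memℒp_of_ae_bound hf.1 hCf (ENNReal.ofReal r)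
  have hgmem := memℒp_of_ae_bound hg.1 hCg (ENNReal.ofReal r)
  have hhmem := memℒp_of_ae_bound hh.1 hCh (ENNReal.ofReal r)
  rw [hfmem.eLpNorm_eq_integral_rpow_norm hp0 hpt, hgmem.eLpNorm_eq_integral_rpow_norm hp0 hpt,
    hhmem.eLpNorm_eq_integral_rpow_norm hp0 hpt]
  simp only [htr, Real.norm_eq_abs]
  have key := abstract_finite hm hΔt hf hg hh KEY hr
  rw [← ENNReal.ofReal_mul hΔt.le, ← ENNReal.ofReal_add
    (Real.rpow_nonneg (integral_nonneg fun x => Real.rpow_nonneg (abs_nonneg _) _) _)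
    (mul_nonneg hΔt.le (Real.rpow_nonneg
      (integral_nonneg fun x => Real.rpow_nonneg (abs_nonneg _) _) _))]
  apply ENNReal.ofReal_le_ofReal
  simpa [one_div] using key

lemma abstract_eLpNorm_top {m : ℝ} (hm : 1 < m) {Δt : ℝ} (hΔt : 0 < Δt)
    {f g h : α → ℝ} (hfm : Measurable f)
    (hf : MemLp f ⊤ μ) (hg : MemLp g ⊤ μ) (hh : MemLp h ⊤ μ)
    (KEY : ∀ r : ℝ, m ≤ r →
      ∫ x, (f x - g x) * spow (r - 1) (f x) ∂μ ≤ Δt * ∫ x, h x * spow (r - 1) (f x) ∂μ) :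
    eLpNorm f ⊤ μ ≤ eLpNorm g ⊤ μ + ENNReal.ofReal Δt * eLpNorm h ⊤ μ := by
  rcases eq_or_ne (μ Set.univ) 0 with hμ0 | hμ0
  · have : μ = 0 := Measure.measure_univ_eq_zero.1 hμ0
    simp [this]
  set B := eLpNorm g ⊤ μ + ENNReal.ofReal Δt * eLpNorm h ⊤ μ with hB
  have hBne : B ≠ ⊤ := by
    refine ENNReal.add_ne_top.2 ⟨hg.2.ne, ENNReal.mul_ne_top ENNReal.ofReal_ne_top hh.2.ne⟩
  set ρ : ℕ → ℝ := fun n => m + n with hρdef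
  have hρ : ∀ n : ℕ, m ≤ ρ n := fun n => by
    simp only [hρdef, le_add_iff_nonneg_right, Nat.cast_nonneg]
  have hρ1 : ∀ n : ℕ, 1 < ρ n := fun n => lt_of_lt_of_le hm (hρ n)
  have hρ0 : ∀ n : ℕ, (0:ℝ) < ρ n := fun n => lt_trans zero_lt_one (hρ1 n)
  set E : ℕ → ℝ≥0∞ := fun n => eLpNorm f (ENNReal.ofReal (ρ n)) μ with hE
  have hδ : Filter.Tendsto (fun n : ℕ => 1 / ρ n) Filter.atTop (nhds 0) := tendsto_exponents
  -- Step A : eLpNorm top ≤ liminf E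
  have stepA : eLpNorm f ⊤ μ ≤ Filter.liminf E Filter.atTop := by
    rw [eLpNorm_exponent_top]
    refine ENNReal.le_of_forall_nnreal_lt fun c hc => ?_
    set s := {x | c < ‖f x‖₊} with hs
    have hsm : MeasurableSet s := measurableSet_lt measurable_const hfm.nnnorm
    have hs0 : μ s ≠ 0 := by
      intro h0
      have hae : ∀ᵐ x ∂μ, ‖f x‖₊ ≤ c := by
        rw [ae_iff]
        simpa [hs, not_le] using h0
      exact absurd (eLpNormEssSup_le_of_ae_nnnorm_bound hae) (not_le.2 hc)
    have hsfin : μ s ≠ ⊤ := measure_ne_top μ s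
    have lower : ∀ n : ℕ, (c : ℝ≥0∞) * μ s ^ (1 / ρ n) ≤ E n := by
      intro n
      have hp0 : ENNReal.ofReal (ρ n) ≠ 0 := by
        simp [ENNReal.ofReal_eq_zero, not_le, hρ0 n]
      have htr : (ENNReal.ofReal (ρ n)).toReal = ρ n := ENNReal.toReal_ofReal (hρ0 n).le
      simp only [hE]
      rw [eLpNorm_eq_lintegral_rpow_enorm_toReal hp0 ENNReal.ofReal_ne_top, htr]
      have h1 : (c : ℝ≥0∞) ^ (ρ n) * μ s ≤ ∫⁻ x, (‖f x‖₊ : ℝ≥0∞) ^ (ρ n) ∂μ := by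
        calc (c : ℝ≥0∞) ^ (ρ n) * μ s = ∫⁻ _ in s, (c : ℝ≥0∞) ^ (ρ n) ∂μ := by
              rw [setLIntegral_const]
          _ ≤ ∫⁻ x in s, (‖f x‖₊ : ℝ≥0∞) ^ (ρ n) ∂μ := by
              refine setLIntegral_mono' hsm fun x hx => ?_
              exact ENNReal.rpow_le_rpow (by exact_mod_cast (le_of_lt hx)) (hρ0 n).le
          _ ≤ ∫⁻ x, (‖f x‖₊ : ℝ≥0∞) ^ (ρ n) ∂μ := setLIntegral_le_lintegral s _
      calc (c : ℝ≥0∞) * μ s ^ (1 / ρ n)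
          = ((c : ℝ≥0∞) ^ (ρ n) * μ s) ^ (1 / ρ n) := by
            rw [ENNReal.mul_rpow_of_nonneg _ _ (by positivity : (0:ℝ) ≤ 1 / ρ n),
              ← ENNReal.rpow_mul, mul_one_div_cancel (hρ0 n).ne', ENNReal.rpow_one]
        _ ≤ (∫⁻ x, (‖f x‖₊ : ℝ≥0∞) ^ (ρ n) ∂μ) ^ (1 / ρ n) :=
            ENNReal.rpow_le_rpow h1 (by positivity)
    have htend : Filter.Tendsto (fun n : ℕ => (c : ℝ≥0∞) * μ s ^ (1 / ρ n)) Filter.atTop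
        (nhds c) := by
      have := ENNReal.Tendsto.const_mul (a := (c : ℝ≥0∞))
        (tendsto_rpow_aux hs0 hsfin hδ) (Or.inl one_ne_zero)
      simpa using this
    calc (c : ℝ≥0∞) = Filter.liminf (fun n : ℕ => (c : ℝ≥0∞) * μ s ^ (1 / ρ n))
          Filter.atTop := (htend.liminf_eq).symm
      _ ≤ Filter.liminf E Filter.atTop :=
          Filter.liminf_le_liminf (Filter.Eventually.of_forall lower)
  -- Step B : liminf E ≤ B
  have stepB : Filter.liminf E Filter.atTop ≤ B := by
    have upper : ∀ n : ℕ, E n ≤ B * μ Set.univ ^ (1 / ρ n) := by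
      intro n
      have h1 := abstract_eLpNorm_finite hm hΔt hf hg hh KEY (hρ n)
      have hg1 : eLpNorm g (ENNReal.ofReal (ρ n)) μ ≤
          eLpNorm g ⊤ μ * μ Set.univ ^ (1 / ρ n) := by
        have := eLpNorm_le_eLpNorm_mul_rpow_measure_univ (μ := μ) (q := ⊤)
          le_top hg.1 (p := ENNReal.ofReal (ρ n))
        simpa [ENNReal.toReal_ofReal (hρ0 n).le] using this
      have hh1 : eLpNorm h (ENNReal.ofReal (ρ n)) μ ≤
          eLpNorm h ⊤ μ * μ Set.univ ^ (1 / ρ n) := by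
        have := eLpNorm_le_eLpNorm_mul_rpow_measure_univ (μ := μ) (q := ⊤)
          le_top hh.1 (p := ENNReal.ofReal (ρ n))
        simpa [ENNReal.toReal_ofReal (hρ0 n).le] using this
      calc E n ≤ eLpNorm g (ENNReal.ofReal (ρ n)) μ +
            ENNReal.ofReal Δt * eLpNorm h (ENNReal.ofReal (ρ n)) μ := h1
        _ ≤ eLpNorm g ⊤ μ * μ Set.univ ^ (1 / ρ n) +
            ENNReal.ofReal Δt * (eLpNorm h ⊤ μ * μ Set.univ ^ (1 / ρ n)) := by
            gcongr
        _ = B * μ Set.univ ^ (1 / ρ n) := by rw [hB]; ring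
    have htend : Filter.Tendsto (fun n : ℕ => B * μ Set.univ ^ (1 / ρ n)) Filter.atTop
        (nhds B) := by
      have := ENNReal.Tendsto.const_mul (a := B)
        (tendsto_rpow_aux hμ0 (measure_ne_top μ _) hδ) (Or.inl one_ne_zero)
      simpa using this
    calc Filter.liminf E Filter.atTop
        ≤ Filter.liminf (fun n : ℕ => B * μ Set.univ ^ (1 / ρ n)) Filter.atTop :=
          Filter.liminf_le_liminf (Filter.Eventually.of_forall upper)
      _ = B := htend.liminf_eq
  exact stepA.trans stepB

end Helpers

/-- scheme `L^r`-estimate for one implicit time step. If `v` solves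
`(1/Δt)β(v) + (−Δ)^s_p v = h + (1/Δt)β(w)` weakly, then for every `r ∈ [m,∞)`:
`‖β(v)‖_{L^r(Ω)} ≤ ‖β(w)‖_{L^r(Ω)} + Δt‖h‖_{L^r(Ω)}`, and the same with `r = ∞`. -/
theorem stmt14 (d : ℕ) (hd : 1 ≤ d) (p s m : ℝ) (hp : 1 < p)
    (hs : s ∈ Set.Ioo (0 : ℝ) 1) (hm : 1 < m)
    (Δt : ℝ) (hΔt : 0 < Δt)
    (Ω : Set (EuclideanSpace ℝ (Fin d))) (hΩo : IsOpen Ω) (hΩb : Bornology.IsBounded Ω)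
    (w h v : EuclideanSpace ℝ (Fin d) → ℝ)
    (hw : MemLp w ⊤ (volume.restrict Ω)) (hh : MemLp h ⊤ (volume.restrict Ω))
    (hv : memW0 d s p Ω v) (hvB : MemLp v ⊤ (volume.restrict Ω))
    (heq : ∀ φ : EuclideanSpace ℝ (Fin d) → ℝ,
      memW0 d s p Ω φ → MemLp φ ⊤ (volume.restrict Ω) →
      (1 / Δt) * (∫ x in Ω, (spow m⁻¹ (v x) - spow m⁻¹ (w x)) * φ x) +
        fracPairing d s p v φ = ∫ x in Ω, h x * φ x) :
    (∀ r : ℝ, m ≤ r →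
      eLpNorm (fun x => spow m⁻¹ (v x)) (ENNReal.ofReal r) (volume.restrict Ω) ≤
        eLpNorm (fun x => spow m⁻¹ (w x)) (ENNReal.ofReal r) (volume.restrict Ω) +
          ENNReal.ofReal Δt * eLpNorm h (ENNReal.ofReal r) (volume.restrict Ω)) ∧
    eLpNorm (fun x => spow m⁻¹ (v x)) ⊤ (volume.restrict Ω) ≤
      eLpNorm (fun x => spow m⁻¹ (w x)) ⊤ (volume.restrict Ω) +
        ENNReal.ofReal Δt * eLpNorm h ⊤ (volume.restrict Ω) := by
  have hminv : (0:ℝ) < m⁻¹ := inv_pos.2 (lt_trans zero_lt_one hm)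
  have hp0 : (0:ℝ) < p := lt_trans zero_lt_one hp
  haveI hfin : IsFiniteMeasure (volume.restrict Ω) :=
    ⟨by rw [Measure.restrict_apply_univ]; exact hΩb.measure_lt_top⟩
  obtain ⟨Cv, hCv0, hCv⟩ := exists_ae_bound hvB
  obtain ⟨Cw, hCw0, hCw⟩ := exists_ae_bound hw
  obtain ⟨Ch, hCh0, hCh⟩ := exists_ae_bound hh
  -- the function f = β(v), g = β(w)
  have hfmeas : Measurable (fun x => spow m⁻¹ (v x)) := (measurable_spow m⁻¹).comp hv.1
  have hfM : MemLp (fun x => spow m⁻¹ (v x)) ⊤ (volume.restrict Ω) := by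
    refine memLp_top_of_bound hfmeas.aestronglyMeasurable (Cv ^ m⁻¹) ?_
    filter_upwards [hCv] with x hx
    rw [Real.norm_eq_abs, abs_spow hminv.ne']
    exact Real.rpow_le_rpow (abs_nonneg _) hx hminv.le
  have hgM : MemLp (fun x => spow m⁻¹ (w x)) ⊤ (volume.restrict Ω) := by
    refine memLp_top_of_bound
      (((measurable_spow m⁻¹).comp_aemeasurable hw.1.aemeasurable).aestronglyMeasurable)
      (Cw ^ m⁻¹) ?_
    filter_upwards [hCw] with x hx
    rw [Real.norm_eq_abs, abs_spow hminv.ne']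
    exact Real.rpow_le_rpow (abs_nonneg _) hx hminv.le
  -- STEP 4 : monotone Lipschitz test functions
  have step4 : ∀ (G : ℝ → ℝ) (L : ℝ), Monotone G → G 0 = 0 → 0 ≤ L →
      (∀ a b : ℝ, |G a - G b| ≤ L * |a - b|) →
      (∫ x in Ω, (spow m⁻¹ (v x) - spow m⁻¹ (w x)) * G (v x)) ≤
        Δt * ∫ x in Ω, h x * G (v x) := by
    intro G L hGmono hG0 hL0 hGlip
    have hGmeas : Measurable G := hGmono.measurable
    have hGabs : ∀ t : ℝ, |G t| ≤ L * |t| := by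
      intro t
      have := hGlip t 0
      rwa [hG0, sub_zero, sub_zero] at this
    have hmem : memW0 d s p Ω (fun x => G (v x)) := by
      refine ⟨hGmeas.comp hv.1, ?_, ?_, ?_⟩
      · refine MemLp.of_le (hv.2.1.const_mul L) (hGmeas.comp hv.1).aestronglyMeasurable
          (Filter.Eventually.of_forall fun x => ?_)
        rw [Real.norm_eq_abs, Real.norm_eq_abs, abs_mul, abs_of_nonneg hL0]
        exact hGabs (v x)
      · have hbound : ∀ z : EuclideanSpace ℝ (Fin d) × EuclideanSpace ℝ (Fin d),
            ENNReal.ofReal (|G (v z.1) - G (v z.2)| ^ p / ‖z.1 - z.2‖ ^ ((d : ℝ) + s * p)) ≤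
              ENNReal.ofReal (L ^ p) *
                ENNReal.ofReal (|v z.1 - v z.2| ^ p / ‖z.1 - z.2‖ ^ ((d : ℝ) + s * p)) := by
          intro z
          rw [← ENNReal.ofReal_mul (Real.rpow_nonneg hL0 _)]
          apply ENNReal.ofReal_le_ofReal
          rw [← mul_div_assoc]
          have h1 : |G (v z.1) - G (v z.2)| ^ p ≤ L ^ p * |v z.1 - v z.2| ^ p := by
            rw [← Real.mul_rpow hL0 (abs_nonneg _)]
            exact Real.rpow_le_rpow (abs_nonneg _) (hGlip _ _) hp0.le
          rw [div_eq_mul_inv, div_eq_mul_inv]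
          exact mul_le_mul_of_nonneg_right h1
            (inv_nonneg.2 (Real.rpow_nonneg (norm_nonneg _) _))
        calc gagliardo d s p (fun x => G (v x))
            ≤ ∫⁻ z : EuclideanSpace ℝ (Fin d) × EuclideanSpace ℝ (Fin d),
              ENNReal.ofReal (L ^ p) *
                ENNReal.ofReal (|v z.1 - v z.2| ^ p / ‖z.1 - z.2‖ ^ ((d : ℝ) + s * p)) :=
              lintegral_mono hbound
          _ = ENNReal.ofReal (L ^ p) * gagliardo d s p v := by
              rw [gagliardo]
              exact lintegral_const_mul' _ _ ENNReal.ofReal_ne_top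
          _ < ⊤ := ENNReal.mul_lt_top ENNReal.ofReal_lt_top hv.2.2.1
      · filter_upwards [hv.2.2.2] with x hx hxΩ
        rw [hx hxΩ, hG0]
    have hmemTop : MemLp (fun x => G (v x)) ⊤ (volume.restrict Ω) := by
      refine memLp_top_of_bound (hGmeas.comp hv.1).aestronglyMeasurable (L * Cv) ?_
      filter_upwards [hCv] with x hx
      rw [Real.norm_eq_abs]
      exact (hGabs (v x)).trans (mul_le_mul_of_nonneg_left hx hL0)
    have Heq := heq (fun x => G (v x)) hmem hmemTop
    have Epos : 0 ≤ fracPairing d s p v (fun x => G (v x)) := by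
      refine integral_nonneg fun z => ?_
      refine div_nonneg ?_ (Real.rpow_nonneg (norm_nonneg _) _)
      rcases le_total (v z.2) (v z.1) with hle | hle
      · exact mul_nonneg (spow_nonneg (by linarith)) (by have := hGmono hle; linarith)
      · have h1 : spow (p - 1) (v z.1 - v z.2) ≤ 0 := spow_nonpos (by linarith)
        have h2 : G (v z.1) - G (v z.2) ≤ 0 := by have := hGmono hle; linarith
        exact mul_nonneg_of_nonpos_of_nonpos h1 h2
    have hstep : (1 / Δt) * (∫ x in Ω, (spow m⁻¹ (v x) - spow m⁻¹ (w x)) * G (v x)) ≤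
        ∫ x in Ω, h x * G (v x) := by linarith
    have := mul_le_mul_of_nonneg_left hstep hΔt.le
    calc (∫ x in Ω, (spow m⁻¹ (v x) - spow m⁻¹ (w x)) * G (v x))
        = Δt * ((1 / Δt) * ∫ x in Ω, (spow m⁻¹ (v x) - spow m⁻¹ (w x)) * G (v x)) := by
          field_simp
      _ ≤ Δt * ∫ x in Ω, h x * G (v x) := this
  -- STEP 5 : dominated convergence
  have tend : ∀ (u : EuclideanSpace ℝ (Fin d) → ℝ) (Cu : ℝ) (q : ℝ), 0 < q →
      AEStronglyMeasurable u (volume.restrict Ω) → (∀ᵐ x ∂(volume.restrict Ω), |u x| ≤ Cu) →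
      Filter.Tendsto (fun n : ℕ => ∫ x in Ω, u x * Gfun q (1 / (n + 1)) Cv (v x))
        Filter.atTop (nhds (∫ x in Ω, u x * spow q (v x))) := by
    intro u Cu q hq hum hub
    have hεpos : ∀ n : ℕ, (0:ℝ) < 1 / (n + 1) := fun n => by positivity
    have hε1 : ∀ n : ℕ, (1:ℝ) / (n + 1) ≤ 1 := fun n => by
      rw [div_le_one (by positivity)]
      simp
    refine tendsto_integral_of_dominated_convergence
      (fun _ => Cu * (Cv + 1) ^ q) ?_ (integrable_const _) ?_ ?_
    · intro n
      exact hum.mul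
        (((Gfun_monotone (hεpos n) hq.le Cv).measurable.comp hv.1).aestronglyMeasurable)
    · intro n
      filter_upwards [hub] with x hx
      rw [Real.norm_eq_abs, abs_mul]
      have h2 := Gfun_bound (hεpos n) (hε1 n) hq hCv0 (v x)
      have h3 : (0:ℝ) ≤ (Cv + 1) ^ q := Real.rpow_nonneg (by linarith) _
      exact mul_le_mul hx h2 (abs_nonneg _) (le_trans (abs_nonneg _) hx)
    · filter_upwards [hCv] with x hx
      exact (Gfun_tendsto hq hCv0 hx).const_mul (u x)
  have key_q : ∀ q : ℝ, 0 < q →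
      (∫ x in Ω, (spow m⁻¹ (v x) - spow m⁻¹ (w x)) * spow q (v x)) ≤
        Δt * ∫ x in Ω, h x * spow q (v x) := by
    intro q hq
    have hεpos : ∀ n : ℕ, (0:ℝ) < 1 / (n + 1) := fun n => by positivity
    have hLnn : ∀ n : ℕ, (0:ℝ) ≤ max q 1 * (((1 / ((n:ℝ) + 1)) ^ 2) ^ ((q - 1) / 2) +
        (Cv ^ 2 + (1 / ((n:ℝ) + 1)) ^ 2) ^ ((q - 1) / 2)) := by
      intro n
      have h1 : (0:ℝ) ≤ ((1 / ((n:ℝ) + 1)) ^ 2) ^ ((q - 1) / 2) :=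
        Real.rpow_nonneg (by positivity) _
      have h2 : (0:ℝ) ≤ (Cv ^ 2 + (1 / ((n:ℝ) + 1)) ^ 2) ^ ((q - 1) / 2) :=
        Real.rpow_nonneg (by positivity) _
      positivity
    have hIneq : ∀ n : ℕ,
        (∫ x in Ω, (spow m⁻¹ (v x) - spow m⁻¹ (w x)) * Gfun q (1 / (n + 1)) Cv (v x)) ≤
          Δt * ∫ x in Ω, h x * Gfun q (1 / (n + 1)) Cv (v x) := by
      intro n
      exact step4 (Gfun q (1 / (n + 1)) Cv) _
        (Gfun_monotone (hεpos n) hq.le Cv) (Gfun_zero hCv0) (hLnn n)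
        (Gfun_lip (hεpos n) hq hCv0)
    have humeas : AEStronglyMeasurable (fun x => spow m⁻¹ (v x) - spow m⁻¹ (w x))
        (volume.restrict Ω) :=
      hfmeas.aestronglyMeasurable.sub
        ((measurable_spow m⁻¹).comp_aemeasurable hw.1.aemeasurable).aestronglyMeasurable
    have hubound : ∀ᵐ x ∂(volume.restrict Ω),
        |spow m⁻¹ (v x) - spow m⁻¹ (w x)| ≤ Cv ^ m⁻¹ + Cw ^ m⁻¹ := by
      filter_upwards [hCv, hCw] with x h1 h2
      have e1 : |spow m⁻¹ (v x)| ≤ Cv ^ m⁻¹ := by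
        rw [abs_spow hminv.ne']; exact Real.rpow_le_rpow (abs_nonneg _) h1 hminv.le
      have e2 : |spow m⁻¹ (w x)| ≤ Cw ^ m⁻¹ := by
        rw [abs_spow hminv.ne']; exact Real.rpow_le_rpow (abs_nonneg _) h2 hminv.le
      calc |spow m⁻¹ (v x) - spow m⁻¹ (w x)| ≤ |spow m⁻¹ (v x)| + |spow m⁻¹ (w x)| :=
            abs_sub _ _
        _ ≤ Cv ^ m⁻¹ + Cw ^ m⁻¹ := by linarith
    have t1 := tend _ _ q hq humeas hubound
    have t2 := (tend h Ch q hq hh.1 hCh).const_mul Δt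
    exact le_of_tendsto_of_tendsto' t1 t2 hIneq
  -- STEP 6 : assemble
  have KEY : ∀ r : ℝ, m ≤ r →
      ∫ x in Ω, ((fun x => spow m⁻¹ (v x)) x - (fun x => spow m⁻¹ (w x)) x) *
          spow (r - 1) ((fun x => spow m⁻¹ (v x)) x) ≤
        Δt * ∫ x in Ω, h x * spow (r - 1) ((fun x => spow m⁻¹ (v x)) x) := by
    intro r hr
    have hq : (0:ℝ) < (r - 1) * m⁻¹ := by
      have : 1 < r := lt_of_lt_of_le hm hr
      have : (0:ℝ) < r - 1 := by linarith
      positivity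
    simp only [spow_spow hminv.ne']
    exact key_q _ hq
  constructor
  · intro r hr
    exact abstract_eLpNorm_finite hm hΔt hfM hgM hh KEY hr
  · exact abstract_eLpNorm_top hm hΔt hfmeas hfM hgM hh KEY
end
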